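/- Let Λ be a ring, ι a finite nonempty type, and for every nonempty subset J ⊆ ι let M_J be a Λ-module. For every nonempty subset K ⊆ ι put N_K := ⊕_{J nonempty, J ∩ K = ∅} M_J, and for K ⊆ K′ let π_{K,K′} : N_K → N_{K′} be the projection that kills the summands M_J with J ∩ K′ ≠ ∅ and is the identity on the remaining summands. Let L be the limit of this diagram over the poset of nonempty subsets of ι, realized as the submodule of ∏_{∅≠K⊆ι} N_K consisting of families (x_K) with π_{K,K′}(x_K) = x_{K′} whenever K ⊆ K′. Then the canonical map p : ⊕_{∅≠J⊆ι} M_J → L, whose K-th component is the projection killing the summands M_J with J ∩ K ≠ ∅, is surjective and its kernel is exactly the canonical copy of the summand M_ι (the summand indexed by J = ι); in particular L ≅ ⊕_{∅≠J⊊ι, J≠∅} M_J. -/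

import Mathlib

open Finset

/-- The projection `⊕_{∅ ≠ J ⊆ ι} M_J → N_K = ⊕_{J ≠ ∅, J ∩ K = ∅} M_J` (realized inside
the product `∏_J M_J`, which is the same as the direct sum since `ι` is finite): it kills
the coordinates `M_J` with `J = ∅` or `J ∩ K ≠ ∅` and is the identity on the others.
Applied to supported elements it also realizes the transition maps `π_{K,K'}`. -/
def projMap (Λ : Type) [Ring Λ] {ι : Type} [DecidableEq ι] (M : Finset ι → Type)
    [∀ J, AddCommGroup (M J)] [∀ J, Module Λ (M J)] (K : Finset ι) :
    (∀ J, M J) →ₗ[Λ] (∀ J, M J) where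
  toFun x J := if J.Nonempty ∧ J ∩ K = ∅ then x J else 0
  map_add' x y := by
    funext J
    by_cases h : J.Nonempty ∧ J ∩ K = ∅ <;> simp [h]
  map_smul' c x := by
    funext J
    by_cases h : J.Nonempty ∧ J ∩ K = ∅ <;> simp [h]

/-- The limit `L = lim_{∅ ≠ K ⊆ ι} N_K`, realized as the submodule of `∏_{∅ ≠ K} N_K`
(each `N_K` being realized as the supported part of `∏_J M_J`) of families `(x_K)` with
`π_{K,K'}(x_K) = x_{K'}` whenever `K ⊆ K'`. -/
def limSub (Λ : Type) [Ring Λ] {ι : Type} [DecidableEq ι] (M : Finset ι → Type)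
    [∀ J, AddCommGroup (M J)] [∀ J, Module Λ (M J)] :
    Submodule Λ (∀ _ : { K : Finset ι // K.Nonempty }, ∀ J, M J) where
  carrier := { x | (∀ K, projMap Λ M K.1 (x K) = x K) ∧
      ∀ K K' : { K : Finset ι // K.Nonempty }, K.1 ⊆ K'.1 →
        projMap Λ M K'.1 (x K) = x K' }
  add_mem' := by
    rintro x y ⟨hx1, hx2⟩ ⟨hy1, hy2⟩
    constructor
    · intro K
      simp only [Pi.add_apply, map_add, hx1 K, hy1 K]
    · intro K K' h
      simp only [Pi.add_apply, map_add, hx2 K K' h, hy2 K K' h]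
  zero_mem' := by
    constructor
    · intro K
      simp only [Pi.zero_apply, map_zero]
    · intro K K' _
      simp only [Pi.zero_apply, map_zero]
  smul_mem' := by
    rintro c x ⟨hx1, hx2⟩
    constructor
    · intro K
      simp only [Pi.smul_apply, map_smul, hx1 K]
    · intro K K' h
      simp only [Pi.smul_apply, map_smul, hx2 K K' h]

/-- The canonical map `p : ⊕_{∅ ≠ J ⊆ ι} M_J → ∏_{∅ ≠ K} N_K`, whose `K`-th component is
the projection killing the summands `M_J` with `J ∩ K ≠ ∅`. -/
def pMap (Λ : Type) [Ring Λ] {ι : Type} [DecidableEq ι] (M : Finset ι → Type)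
    [∀ J, AddCommGroup (M J)] [∀ J, Module Λ (M J)] :
    (∀ J, M J) →ₗ[Λ] (∀ _ : { K : Finset ι // K.Nonempty }, ∀ J, M J) :=
  LinearMap.pi fun K => projMap Λ M K.1


section Aux
set_option linter.unusedSectionVars false

variable (Λ : Type) [Ring Λ] {ι : Type} [Fintype ι] [DecidableEq ι]
  (M : Finset ι → Type) [∀ J, AddCommGroup (M J)] [∀ J, Module Λ (M J)]

lemma projMap_apply (K : Finset ι) (x : ∀ J, M J) (J : Finset ι) :
    projMap Λ M K x J = if J.Nonempty ∧ J ∩ K = ∅ then x J else 0 := rfl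

lemma pMap_apply (y : ∀ J, M J) (K : { K : Finset ι // K.Nonempty }) :
    pMap Λ M y K = projMap Λ M K.1 y := rfl

lemma ne_univ_of_inter {J K : Finset ι} (hK : K.Nonempty) (h : J ∩ K = ∅) :
    J ≠ Finset.univ := by
  rintro rfl
  simp only [Finset.univ_inter] at h
  exact absurd h (Finset.nonempty_iff_ne_empty.mp hK)

lemma subset_compl_of_inter {J K : Finset ι} (h : J ∩ K = ∅) : K ⊆ Jᶜ :=
  le_compl_iff_disjoint_left.mpr (Finset.disjoint_iff_inter_eq_empty.mpr h)

lemma compl_nonempty_of_ne_univ {J : Finset ι} (h : J ≠ Finset.univ) : Jᶜ.Nonempty := by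
  simp [Finset.nonempty_iff_ne_empty, Finset.compl_eq_empty_iff, h]

/-- The section: recover `y J` as the `J`-component of `x_{Jᶜ}`. -/
def sec : (∀ _ : { K : Finset ι // K.Nonempty }, ∀ J, M J) →ₗ[Λ] (∀ J, M J) where
  toFun x J := if h : J.Nonempty ∧ J ≠ Finset.univ then
      x ⟨Jᶜ, compl_nonempty_of_ne_univ h.2⟩ J else 0
  map_add' x y := by
    funext J
    by_cases h : J.Nonempty ∧ J ≠ Finset.univ <;> simp [h]
  map_smul' c x := by
    funext J
    by_cases h : J.Nonempty ∧ J ≠ Finset.univ <;> simp [h]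

lemma sec_apply (x : ∀ _ : { K : Finset ι // K.Nonempty }, ∀ J, M J) (J : Finset ι) :
    sec Λ M x J = if h : J.Nonempty ∧ J ≠ Finset.univ then
      x ⟨Jᶜ, compl_nonempty_of_ne_univ h.2⟩ J else 0 := rfl

lemma pMap_mem (y : ∀ J, M J) : pMap Λ M y ∈ limSub Λ M := by
  constructor
  · intro K
    funext J
    by_cases h : J.Nonempty ∧ J ∩ K.1 = ∅ <;>
      simp [pMap_apply, projMap_apply, h]
  · intro K K' hKK'
    funext J
    by_cases h : J.Nonempty ∧ J ∩ K'.1 = ∅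
    · have hK : J ∩ K.1 = ∅ :=
        Finset.subset_empty.mp (h.2 ▸ Finset.inter_subset_inter_left hKK')
      simp [pMap_apply, projMap_apply, h, h.1, hK]
    · simp [pMap_apply, projMap_apply, h]

lemma pMap_sec (x : ∀ _ : { K : Finset ι // K.Nonempty }, ∀ J, M J)
    (hx : x ∈ limSub Λ M) : pMap Λ M (sec Λ M x) = x := by
  obtain ⟨hx1, hx2⟩ := hx
  funext K J
  rw [pMap_apply, projMap_apply]
  by_cases h : J.Nonempty ∧ J ∩ K.1 = ∅
  · have hJu : J ≠ Finset.univ := ne_univ_of_inter K.2 h.2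
    rw [if_pos h, sec_apply, dif_pos ⟨h.1, hJu⟩]
    have := hx2 K ⟨Jᶜ, compl_nonempty_of_ne_univ hJu⟩ (subset_compl_of_inter h.2)
    rw [← this, projMap_apply, if_pos ⟨h.1, by simp⟩]
  · rw [if_neg h]
    have := congrFun (hx1 K) J
    rw [projMap_apply, if_neg h] at this
    exact this

lemma sec_pMap (y : ∀ J, M J) (h0 : y ∅ = 0) (hu : y Finset.univ = 0) :
    sec Λ M (pMap Λ M y) = y := by
  funext J
  rw [sec_apply]
  by_cases h : J.Nonempty ∧ J ≠ Finset.univ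
  · rw [dif_pos h, pMap_apply, projMap_apply, if_pos ⟨h.1, by simp⟩]
  · rw [dif_neg h]
    rcases not_and_or.mp h with h1 | h2
    · rw [Finset.not_nonempty_iff_eq_empty.mp h1, h0]
    · rw [not_not.mp h2, hu]

end Aux

/-- The direct sum `⊕_{∅ ≠ J ⊆ ι} M_J` is realized as the elements `y` of `∏_J M_J` with
`y ∅ = 0` (`ι` being finite).  The canonical map `p` lands in the limit `L`, is surjective
onto `L`, and its kernel is exactly the canonical copy of the summand `M_ι`
(the elements supported at `J = ι`); in particular `L` is isomorphic to the direct sum of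
the `M_J` over the proper nonempty subsets `J ⊊ ι`. -/

theorem stmt4 (Λ : Type) [Ring Λ] (ι : Type) [Fintype ι] [DecidableEq ι] [Nonempty ι]
    (M : Finset ι → Type) [∀ J, AddCommGroup (M J)] [∀ J, Module Λ (M J)] :
    (∀ y : ∀ J, M J, y ∅ = 0 → pMap Λ M y ∈ limSub Λ M) ∧
    (∀ x ∈ limSub Λ M, ∃ y : ∀ J, M J, y ∅ = 0 ∧ pMap Λ M y = x) ∧
    (∀ y : ∀ J, M J, y ∅ = 0 →
      (pMap Λ M y = 0 ↔ ∀ J : Finset ι, J ≠ Finset.univ → y J = 0)) ∧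
    Nonempty ((limSub Λ M) ≃ₗ[Λ]
      (LinearMap.ker (LinearMap.proj (R := Λ) (φ := M) (∅ : Finset ι)) ⊓
        LinearMap.ker (LinearMap.proj (R := Λ) (φ := M) Finset.univ) :
          Submodule Λ (∀ J, M J))) := by
  refine ⟨fun y _ => pMap_mem Λ M y, ?_, ?_, ?_⟩
  · intro x hx
    refine ⟨sec Λ M x, ?_, pMap_sec Λ M x hx⟩
    rw [sec_apply, dif_neg (by simp)]
  · intro y h0
    constructor
    · intro hz J hJ
      by_cases hne : J = ∅
      · rw [hne, h0]
      · have hJne : J.Nonempty := Finset.nonempty_iff_ne_empty.mpr hne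
        have := congrFun (congrFun hz ⟨Jᶜ, compl_nonempty_of_ne_univ hJ⟩) J
        rwa [pMap_apply, projMap_apply, if_pos ⟨hJne, by simp⟩, Pi.zero_apply] at this
    · intro h
      funext K J
      show (if J.Nonempty ∧ J ∩ K.1 = ∅ then y J else 0) = 0
      by_cases hc : J.Nonempty ∧ J ∩ K.1 = ∅
      · rw [if_pos hc]; exact h J (ne_univ_of_inter K.2 hc.2)
      · rw [if_neg hc]
  · set P : Submodule Λ (∀ J, M J) :=
      (LinearMap.ker (LinearMap.proj (R := Λ) (φ := M) (∅ : Finset ι)) ⊓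
        LinearMap.ker (LinearMap.proj (R := Λ) (φ := M) Finset.univ)) with hP
    have hmem : ∀ x : limSub Λ M, sec Λ M x.1 ∈ P := by
      intro x
      rw [hP, Submodule.mem_inf, LinearMap.mem_ker, LinearMap.mem_ker,
        LinearMap.proj_apply, LinearMap.proj_apply, sec_apply, sec_apply,
        dif_neg (by simp), dif_neg (by simp)]
      exact ⟨rfl, rfl⟩
    refine ⟨LinearEquiv.ofLinear
      (LinearMap.codRestrict P ((sec Λ M).comp (limSub Λ M).subtype) hmem)
      (LinearMap.codRestrict (limSub Λ M) ((pMap Λ M).comp P.subtype)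
        (fun y => pMap_mem Λ M y.1)) ?_ ?_⟩
    · ext y
      have h0 : (y : ∀ J, M J) ∅ = 0 := y.2.1
      have hu : (y : ∀ J, M J) Finset.univ = 0 := y.2.2
      exact congrFun (sec_pMap Λ M y.1 h0 hu) _
    · ext x
      exact congrFun (congrFun (pMap_sec Λ M x.1 x.2) _) _
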